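/- (Core of the failure-set contradiction: 2-blocked families are small.) Let J be a finite set of jobs feasible on m machines. Let S_0 ⊆ J with |I(S_0)| ≥ 1, and let S_1, …, S_k ⊆ J be pairwise disjoint sets such that for every 1 ≤ i ≤ k: I(S_0) ⊆ I(S_i), and every job j ∈ S_i satisfies |I(S_0) ∩ I(j)| ≥ 2·ℓ_j. Then k ≤ 2m. -/

import Mathlib

/-- A job given by integer release date `r`, deadline `d`, and processing time `p`. -/
structure Job where
  r : ℤ
  d : ℤ
  p : ℤ
deriving DecidableEq

/-- A job is valid if `1 ≤ p` and `r + p ≤ d`. -/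
def Job.valid (j : Job) : Prop := 1 ≤ j.p ∧ j.r + j.p ≤ j.d

/-- The interval `I(j) = {t ∈ ℤ : r ≤ t < d}` of a job. -/
noncomputable def Job.interval (j : Job) : Finset ℤ := Finset.Ico j.r j.d

/-- The laxity `ℓ_j = d - r - p` of a job. -/
def Job.lax (j : Job) : ℤ := j.d - j.r - j.p

/-- The contribution `C(j, I) = max {0, |I ∩ I(j)| - ℓ_j}` of a job to a finite set `I ⊆ ℤ`. -/
noncomputable def contribution (j : Job) (I : Finset ℤ) : ℤ :=
  max 0 (((I ∩ j.interval).card : ℤ) - j.lax)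

/-- A finite set of jobs `J` is feasible on `m` machines. -/
def Feasible (J : Finset Job) (m : ℕ) : Prop :=
  ∃ σ : ℤ → Finset Job,
    (∀ t, σ t ⊆ J) ∧
    (∀ t, (σ t).card ≤ m) ∧
    (∀ t, ∀ j ∈ σ t, j.r ≤ t ∧ t < j.d) ∧
    (∀ j ∈ J, ((Finset.Ico j.r j.d).filter (fun t => j ∈ σ t)).card = j.p.toNat)

/-- `I(S) = ⋃_{j ∈ S} I(j)` for a finite set of jobs. -/
noncomputable def intervalSet (S : Finset Job) : Finset ℤ := S.biUnion (fun j => Finset.Ico j.r j.d)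

/-- 2-blocked families are small: if `S_1, …, S_k ⊆ J` are pairwise
disjoint, each `I(S_i)` contains `I(S_0)` (which is nonempty), and every `j ∈ S_i`
satisfies `|I(S_0) ∩ I(j)| ≥ 2 ℓ_j`, then `k ≤ 2m`. -/
theorem two_blocked_families_small
    (J : Finset Job) (hJ : ∀ j ∈ J, j.valid) (m : ℕ) (hfeas : Feasible J m)
    (k : ℕ) (S : ℕ → Finset Job)
    (hsub : ∀ i ≤ k, S i ⊆ J)
    (h0 : 1 ≤ (intervalSet (S 0)).card)
    (hdisj : ∀ i, 1 ≤ i → i ≤ k → ∀ i', 1 ≤ i' → i' ≤ k → i ≠ i' → Disjoint (S i) (S i'))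
    (hcontain : ∀ i, 1 ≤ i → i ≤ k → intervalSet (S 0) ⊆ intervalSet (S i))
    (hblock : ∀ i, 1 ≤ i → i ≤ k → ∀ j ∈ S i,
      2 * j.lax ≤ ((intervalSet (S 0) ∩ j.interval).card : ℤ)) :
    k ≤ 2 * m := by
  obtain ⟨σ, hσJ, hσm, hσtime, hσp⟩ := hfeas
  set I0 : Finset ℤ := intervalSet (S 0) with hI0def
  set W : Job → ℤ := fun j => ((I0.filter (fun t => j ∈ σ t)).card : ℤ) with hWdef
  have hWnn : ∀ j, 0 ≤ W j := fun j => Int.natCast_nonneg _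
  -- per-job bound: |I0 ∩ I(j)| ≤ 2 * (time j runs inside I0)
  have hjob : ∀ i, 1 ≤ i → i ≤ k → ∀ j ∈ S i,
      ((I0 ∩ j.interval).card : ℤ) ≤ 2 * W j := by
    intro i hi1 hik j hj
    have hjJ : j ∈ J := hsub i hik hj
    obtain ⟨hp1, hpd⟩ := hJ j hjJ
    have hAcard := hσp j hjJ
    set A : Finset ℤ := (Finset.Ico j.r j.d).filter (fun t => j ∈ σ t) with hAdef
    have hBA : I0.filter (fun t => j ∈ σ t) = A ∩ I0 := by
      ext t
      simp only [hAdef, Finset.mem_filter, Finset.mem_inter, Finset.mem_Ico]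
      constructor
      · rintro ⟨ht, hrun⟩
        exact ⟨⟨⟨(hσtime t j hrun).1, (hσtime t j hrun).2⟩, hrun⟩, ht⟩
      · rintro ⟨⟨_, hrun⟩, ht⟩
        exact ⟨ht, hrun⟩
    have h2 : (A \ I0).card + (A ∩ I0).card = A.card :=
      Finset.card_sdiff_add_card_inter A I0
    have h3 : (A \ I0).card ≤ ((Finset.Ico j.r j.d) \ I0).card :=
      Finset.card_le_card (Finset.sdiff_subset_sdiff (Finset.filter_subset _ _) Finset.Subset.rfl)
    have h4 : ((Finset.Ico j.r j.d) \ I0).card + ((Finset.Ico j.r j.d) ∩ I0).card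
        = (Finset.Ico j.r j.d).card := Finset.card_sdiff_add_card_inter _ _
    have h5 : (Finset.Ico j.r j.d).card = (j.d - j.r).toNat := Int.card_Ico j.r j.d
    have hblk := hblock i hi1 hik j hj
    have hlax : j.lax = j.d - j.r - j.p := rfl
    have hic : (I0 ∩ j.interval).card = ((Finset.Ico j.r j.d) ∩ I0).card := by
      rw [Finset.inter_comm]; rfl
    have hW : W j = ((A ∩ I0).card : ℤ) := by
      show ((I0.filter (fun t => j ∈ σ t)).card : ℤ) = _
      rw [hBA]
    rw [hic, hW]
    rw [hic] at hblk
    omega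
  -- per-set bound: |I0| ≤ 2 * (work of S i inside I0)
  have key : ∀ i, 1 ≤ i → i ≤ k → (I0.card : ℤ) ≤ 2 * ∑ j ∈ S i, W j := by
    intro i hi1 hik
    have hcov : I0 ⊆ (S i).biUnion (fun j => I0 ∩ j.interval) := by
      intro t ht
      have ht' := hcontain i hi1 hik ht
      rw [intervalSet, Finset.mem_biUnion] at ht'
      obtain ⟨j, hjS, hjt⟩ := ht'
      exact Finset.mem_biUnion.mpr ⟨j, hjS, Finset.mem_inter.mpr ⟨ht, hjt⟩⟩
    have h1 : (I0.card : ℤ) ≤ ∑ j ∈ S i, ((I0 ∩ j.interval).card : ℤ) := by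
      have ha := Finset.card_le_card hcov
      have hb := Finset.card_biUnion_le (s := S i) (t := fun j => I0 ∩ j.interval)
      exact_mod_cast le_trans ha hb
    calc (I0.card : ℤ) ≤ ∑ j ∈ S i, ((I0 ∩ j.interval).card : ℤ) := h1
      _ ≤ ∑ j ∈ S i, 2 * W j := Finset.sum_le_sum (fun j hj => hjob i hi1 hik j hj)
      _ = 2 * ∑ j ∈ S i, W j := by rw [Finset.mul_sum]
  -- total work inside I0
  have hswap : ∑ j ∈ J, W j = ∑ t ∈ I0, ((σ t).card : ℤ) := by
    have : ∀ t ∈ I0, ((σ t).card : ℤ) = ∑ j ∈ J, (if j ∈ σ t then (1:ℤ) else 0) := by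
      intro t _
      have hft : J.filter (fun j => j ∈ σ t) = σ t := by
        ext j
        simp only [Finset.mem_filter]
        exact ⟨fun h => h.2, fun h => ⟨hσJ t h, h⟩⟩
      have hcf : (((J.filter (fun j => j ∈ σ t)).card : ℕ) : ℤ)
          = ∑ j ∈ J, if j ∈ σ t then (1:ℤ) else 0 := by
        rw [Finset.card_filter]
        push_cast
        rfl
      rw [← hcf, hft]
    rw [Finset.sum_congr rfl this, Finset.sum_comm]
    apply Finset.sum_congr rfl
    intro j _
    show ((I0.filter (fun t => j ∈ σ t)).card : ℤ) = _
    rw [Finset.card_filter]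
    push_cast
    rfl
  have hm : ∑ t ∈ I0, ((σ t).card : ℤ) ≤ (m : ℤ) * I0.card := by
    calc ∑ t ∈ I0, ((σ t).card : ℤ) ≤ ∑ _t ∈ I0, (m : ℤ) :=
          Finset.sum_le_sum (fun t _ => by exact_mod_cast hσm t)
      _ = (I0.card : ℤ) * m := by rw [Finset.sum_const, nsmul_eq_mul]
      _ = (m : ℤ) * I0.card := mul_comm _ _
  -- disjoint union bound
  have hpd : (↑(Finset.Icc 1 k) : Set ℕ).PairwiseDisjoint S := by
    intro i hi i' hi' hne
    simp only [Finset.coe_Icc, Set.mem_Icc] at hi hi'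
    exact hdisj i hi.1 hi.2 i' hi'.1 hi'.2 hne
  have hsumb : ∑ i ∈ Finset.Icc 1 k, ∑ j ∈ S i, W j
      = ∑ j ∈ (Finset.Icc 1 k).biUnion S, W j := (Finset.sum_biUnion hpd).symm
  have hTJ : (Finset.Icc 1 k).biUnion S ⊆ J := by
    intro j hj
    rw [Finset.mem_biUnion] at hj
    obtain ⟨i, hi, hji⟩ := hj
    rw [Finset.mem_Icc] at hi
    exact hsub i hi.2 hji
  have hle : ∑ j ∈ (Finset.Icc 1 k).biUnion S, W j ≤ ∑ j ∈ J, W j :=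
    Finset.sum_le_sum_of_subset_of_nonneg hTJ (fun j _ _ => hWnn j)
  have hkc : (k : ℤ) * I0.card ≤ 2 * ∑ j ∈ J, W j := by
    calc (k : ℤ) * I0.card = ∑ _i ∈ Finset.Icc 1 k, (I0.card : ℤ) := by
          rw [Finset.sum_const, Nat.card_Icc, nsmul_eq_mul]
          simp
      _ ≤ ∑ i ∈ Finset.Icc 1 k, 2 * ∑ j ∈ S i, W j :=
          Finset.sum_le_sum (fun i hi =>
            key i (Finset.mem_Icc.mp hi).1 (Finset.mem_Icc.mp hi).2)
      _ = 2 * ∑ i ∈ Finset.Icc 1 k, ∑ j ∈ S i, W j := (Finset.mul_sum _ _ _).symm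
      _ = 2 * ∑ j ∈ (Finset.Icc 1 k).biUnion S, W j := by rw [hsumb]
      _ ≤ 2 * ∑ j ∈ J, W j := by linarith
  have hfin : (k : ℤ) * I0.card ≤ (2 * m : ℤ) * I0.card := by
    rw [hswap] at hkc
    calc (k : ℤ) * I0.card ≤ 2 * ∑ t ∈ I0, ((σ t).card : ℤ) := hkc
      _ ≤ 2 * ((m : ℤ) * I0.card) := by linarith
      _ = (2 * m : ℤ) * I0.card := by ring
  have h0' : (1 : ℤ) ≤ (I0.card : ℤ) := by exact_mod_cast h0
  have : (k : ℤ) ≤ 2 * m := le_of_mul_le_mul_right hfin (by linarith)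
  exact_mod_cast this
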